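/- Let F be a Set-functor that preserves 1/4-mono pullbacks. If for every composable sequence of total and surjective relations r₁, …, rₙ one has that rₙ ⋅ … ⋅ r₁ = 1_X (for some set X) implies F̄rₙ ⋅ … ⋅ F̄r₁ ≤ 1_{F X}, then F admits a normal lax extension. Here F̄ denotes the Barr lifting of F. -/

import Mathlib

open CategoryTheory

universe u

/-- A relation from `X` to `Y`. -/
abbrev Rel' (X Y : Type u) : Type u := X → Y → Prop

/-- Composite `s ⋅ r` of `r : X ⇸ Y` and `s : Y ⇸ Z`. -/
def relComp {X Y Z : Type u} (s : Rel' Y Z) (r : Rel' X Y) : Rel' X Z :=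
  fun x z => ∃ y, r x y ∧ s y z

/-- Converse relation `r°`. -/
def relConv {X Y : Type u} (r : Rel' X Y) : Rel' Y X := fun y x => r x y

/-- Identity relation `1_X`. -/
def relId (X : Type u) : Rel' X X := fun x y => x = y

/-- The graph relation of a function. -/
def graphRel {X Y : Type u} (f : X → Y) : Rel' X Y := fun x y => f x = y

/-- Pointwise order `r ≤ r'` on relations. -/
def relLe {X Y : Type u} (r r' : Rel' X Y) : Prop := ∀ x y, r x y → r' x y

/-- A relation is total if every `x` is related to some `y`. -/
def relTotal {X Y : Type u} (r : Rel' X Y) : Prop := ∀ x, ∃ y, r x y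

/-- A relation is surjective if every `y` is related to some `x`. -/
def relSurj {X Y : Type u} (r : Rel' X Y) : Prop := ∀ y, ∃ x, r x y

/-- A lax extension of a `Set`-functor `F`. -/
structure LaxExt (F : Type u ⥤ Type u) : Type (u + 1) where
  ext : ∀ {X Y : Type u}, Rel' X Y → Rel' (F.obj X) (F.obj Y)
  mono : ∀ {X Y : Type u} (r r' : Rel' X Y), relLe r r' → relLe (ext r) (ext r')
  lcomp : ∀ {X Y Z : Type u} (r : Rel' X Y) (s : Rel' Y Z),
    relLe (relComp (ext s) (ext r)) (ext (relComp s r))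
  mapLe : ∀ {X Y : Type u} (f : X → Y), relLe (graphRel (F.map (TypeCat.ofHom f))) (ext (graphRel f))
  mapConvLe : ∀ {X Y : Type u} (f : X → Y),
    relLe (relConv (graphRel (F.map (TypeCat.ofHom f)))) (ext (relConv (graphRel f)))

/-- A relax extension of a `Set`-functor `F` (a lax extension without (L2)). -/
structure RelaxExt (F : Type u ⥤ Type u) : Type (u + 1) where
  ext : ∀ {X Y : Type u}, Rel' X Y → Rel' (F.obj X) (F.obj Y)
  mono : ∀ {X Y : Type u} (r r' : Rel' X Y), relLe r r' → relLe (ext r) (ext r')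
  mapLe : ∀ {X Y : Type u} (f : X → Y), relLe (graphRel (F.map (TypeCat.ofHom f))) (ext (graphRel f))
  mapConvLe : ∀ {X Y : Type u} (f : X → Y),
    relLe (relConv (graphRel (F.map (TypeCat.ofHom f)))) (ext (relConv (graphRel f)))

/-- Normality (identity-preservation) of a lax extension. -/
def LaxExt.IsNormal {F : Type u ⥤ Type u} (L : LaxExt F) : Prop :=
  ∀ X : Type u, L.ext (relId X) = relId (F.obj X)

/-- The Barr lifting of a relation along a functor, computed from the canonical span. -/
def BarrLift (F : Type u ⥤ Type u) {X Y : Type u} (r : Rel' X Y) :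
    Rel' (F.obj X) (F.obj Y) :=
  fun a b => ∃ t : F.obj {p : X × Y // r p.1 p.2},
    F.map (TypeCat.ofHom (fun p : {p : X × Y // r p.1 p.2} => p.1.1)) t = a ∧
    F.map (TypeCat.ofHom (fun p : {p : X × Y // r p.1 p.2} => p.1.2)) t = b

/-- A commutative square of functions that is a pullback. -/
def IsPBSquare {P X Y Z : Type u} (p₁ : P → X) (p₂ : P → Y) (f : X → Z) (g : Y → Z) : Prop :=
  (∀ p, f (p₁ p) = g (p₂ p)) ∧ ∀ x y, f x = g y → ∃! p, p₁ p = x ∧ p₂ p = y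

/-- A commutative square of functions that is a weak pullback. -/
def IsWeakPBSquare {P X Y Z : Type u} (p₁ : P → X) (p₂ : P → Y) (f : X → Z) (g : Y → Z) : Prop :=
  (∀ p, f (p₁ p) = g (p₂ p)) ∧ ∀ x y, f x = g y → ∃ p, p₁ p = x ∧ p₂ p = y

/-- `F` preserves 1/4-iso pullbacks. -/
def Preserves14IsoPullbacks (F : Type u ⥤ Type u) : Prop :=
  ∀ (P X Y Z : Type u) (p₁ : P → X) (p₂ : P → Y) (f : X → Z) (g : Y → Z),
    Function.Bijective p₂ → IsPBSquare p₁ p₂ f g →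
      IsPBSquare (F.map (TypeCat.ofHom p₁)) (F.map (TypeCat.ofHom p₂)) (F.map (TypeCat.ofHom f)) (F.map (TypeCat.ofHom g))

/-- `F` preserves 1/4-iso 2/4-mono pullbacks. -/
def Preserves14Iso24MonoPullbacks (F : Type u ⥤ Type u) : Prop :=
  ∀ (P X Y Z : Type u) (p₁ : P → X) (p₂ : P → Y) (f : X → Z) (g : Y → Z),
    Function.Bijective p₂ → Function.Injective p₁ → Function.Injective g →
      IsPBSquare p₁ p₂ f g →
      IsPBSquare (F.map (TypeCat.ofHom p₁)) (F.map (TypeCat.ofHom p₂)) (F.map (TypeCat.ofHom f)) (F.map (TypeCat.ofHom g))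

/-- `F` preserves 1/4-mono pullbacks. -/
def Preserves14MonoPullbacks (F : Type u ⥤ Type u) : Prop :=
  ∀ (P X Y Z : Type u) (p₁ : P → X) (p₂ : P → Y) (f : X → Z) (g : Y → Z),
    Function.Injective p₁ → IsPBSquare p₁ p₂ f g →
      IsPBSquare (F.map (TypeCat.ofHom p₁)) (F.map (TypeCat.ofHom p₂)) (F.map (TypeCat.ofHom f)) (F.map (TypeCat.ofHom g))

/-- `F` preserves inverse images. -/
def PreservesInverseImages (F : Type u ⥤ Type u) : Prop :=
  ∀ (P X Y Z : Type u) (p₁ : P → X) (p₂ : P → Y) (f : X → Z) (g : Y → Z),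
    Function.Injective p₁ → Function.Injective g → IsPBSquare p₁ p₂ f g →
      IsPBSquare (F.map (TypeCat.ofHom p₁)) (F.map (TypeCat.ofHom p₂)) (F.map (TypeCat.ofHom f)) (F.map (TypeCat.ofHom g))

/-- `F` weakly preserves 4/4-epi pullbacks. -/
def WeaklyPreserves44EpiPullbacks (F : Type u ⥤ Type u) : Prop :=
  ∀ (P X Y Z : Type u) (p₁ : P → X) (p₂ : P → Y) (f : X → Z) (g : Y → Z),
    Function.Surjective p₁ → Function.Surjective p₂ →
    Function.Surjective f → Function.Surjective g →
    IsPBSquare p₁ p₂ f g →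
      IsWeakPBSquare (F.map (TypeCat.ofHom p₁)) (F.map (TypeCat.ofHom p₂)) (F.map (TypeCat.ofHom f)) (F.map (TypeCat.ofHom g))

/-- A (nonempty) composable sequence of relations from `X` to `Z`. -/
inductive RelChain : Type u → Type u → Type (u + 1)
  | single : ∀ {X Y : Type u}, Rel' X Y → RelChain X Y
  | cons : ∀ {X Y Z : Type u}, Rel' X Y → RelChain Y Z → RelChain X Z

/-- Composite of a composable sequence of relations (first relation applied first). -/
def RelChain.comp : ∀ {X Z : Type u}, RelChain X Z → Rel' X Z
  | _, _, .single r => r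
  | _, _, .cons r c => relComp (RelChain.comp c) r

/-- Composite of the Barr liftings of a composable sequence of relations. -/
def RelChain.barr (F : Type u ⥤ Type u) : ∀ {X Z : Type u}, RelChain X Z → Rel' (F.obj X) (F.obj Z)
  | _, _, .single r => BarrLift F r
  | _, _, .cons r c => relComp (RelChain.barr F c) (BarrLift F r)

/-- Length (number of relations) of a composable sequence. -/
def RelChain.length : ∀ {X Z : Type u}, RelChain X Z → ℕ
  | _, _, .single _ => 1
  | _, _, .cons _ c => RelChain.length c + 1

/-- All relations in a composable sequence are total and surjective. -/
def RelChain.allTS : ∀ {X Z : Type u}, RelChain X Z → Prop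
  | _, _, .single r => relTotal r ∧ relSurj r
  | _, _, .cons r c => (relTotal r ∧ relSurj r) ∧ RelChain.allTS c

/-- All relations in a composable sequence except the last one are total and surjective. -/
def RelChain.initTS : ∀ {X Z : Type u}, RelChain X Z → Prop
  | _, _, .single _ => True
  | _, _, .cons r c => (relTotal r ∧ relSurj r) ∧ RelChain.initTS c

/-- Composite of the images of a composable sequence of relations under an assignment `R`. -/
def RelChain.lift (F : Type u ⥤ Type u)
    (R : ∀ {X Y : Type u}, Rel' X Y → Rel' (F.obj X) (F.obj Y)) :
    ∀ {X Z : Type u}, RelChain X Z → Rel' (F.obj X) (F.obj Z)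
  | _, _, .single r => R r
  | _, _, .cons r c => relComp (RelChain.lift F (fun {_ _} s => R s) c) (R r)

/-- `r ⋅ (r° ⋅ r)ⁿ`. -/
def dfPow {X Y : Type u} (r : Rel' X Y) : ℕ → Rel' X Y
  | 0 => r
  | n + 1 => relComp (dfPow r n) (relComp (relConv r) r)

/-- The difunctional closure `r̂ = ⋁ₙ r ⋅ (r° ⋅ r)ⁿ` of a relation. -/
def difunClosure {X Y : Type u} (r : Rel' X Y) : Rel' X Y :=
  fun x y => ∃ n : ℕ, dfPow r n x y

section Auxiliary

lemma myProdExt {α β : Type u} {p q : α × β} (h1 : p.1 = q.1) (h2 : p.2 = q.2) : p = q := by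
  cases p; cases q; cases h1; cases h2; rfl

variable (F : Type u ⥤ Type u)

lemma fmap_fmap {X Y Z : Type u} (f : X → Y) (g : Y → Z) (x : F.obj X) :
    F.map (TypeCat.ofHom g) (F.map (TypeCat.ofHom f) x) = F.map (TypeCat.ofHom (fun a => g (f a))) x := by
  have h := congrArg (fun φ => φ x) (F.map_comp (TypeCat.ofHom f) (TypeCat.ofHom g))
  exact h.symm

lemma fmap_id' {X : Type u} (x : F.obj X) : F.map (TypeCat.ofHom (fun a : X => a)) x = x := by
  have h : TypeCat.ofHom (fun a : X => a) = 𝟙 X := rfl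
  rw [h, F.map_id]; rfl

/-- Barr lifting of a graph relation contains the graph of the image. -/
lemma barr_graph {X Y : Type u} (f : X → Y) (a : F.obj X) :
    BarrLift F (graphRel f) a (F.map (TypeCat.ofHom f) a) := by
  refine ⟨F.map (TypeCat.ofHom (fun x : X => (⟨(x, f x), rfl⟩ : {p : X × Y // graphRel f p.1 p.2}))) a, ?_, ?_⟩
  · rw [fmap_fmap]; exact fmap_id' F a
  · rw [fmap_fmap]

lemma barr_graphConv {X Y : Type u} (f : X → Y) (b : F.obj X) :
    BarrLift F (relConv (graphRel f)) (F.map (TypeCat.ofHom f) b) b := by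
  refine ⟨F.map (TypeCat.ofHom (fun x : X =>
      (⟨(f x, x), rfl⟩ : {p : Y × X // relConv (graphRel f) p.1 p.2}))) b, ?_, ?_⟩
  · rw [fmap_fmap]
  · rw [fmap_fmap]; exact fmap_id' F b

lemma barr_relId {X : Type u} (a : F.obj X) : BarrLift F (relId X) a a := by
  refine ⟨F.map (TypeCat.ofHom (fun x : X => (⟨(x, x), rfl⟩ : {p : X × X // relId X p.1 p.2}))) a, ?_, ?_⟩
  · rw [fmap_fmap]; exact fmap_id' F a
  · rw [fmap_fmap]; exact fmap_id' F a

/-- Appending two composable chains. -/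
def myAppend : ∀ {X Y Z : Type u}, RelChain X Y → RelChain Y Z → RelChain X Z
  | _, _, _, .single r, c₂ => .cons r c₂
  | _, _, _, .cons r c, c₂ => .cons r (myAppend c c₂)

lemma relComp_assoc {W X Y Z : Type u} (r : Rel' W X) (s : Rel' X Y) (t : Rel' Y Z) :
    relComp t (relComp s r) = relComp (relComp t s) r := by
  funext w z; apply propext
  constructor
  · rintro ⟨y, ⟨x, hr, hs⟩, ht⟩; exact ⟨x, hr, y, hs, ht⟩
  · rintro ⟨x, hr, y, hs, ht⟩; exact ⟨y, ⟨x, hr, hs⟩, ht⟩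

lemma comp_myAppend : ∀ {X Y Z : Type u} (c₁ : RelChain X Y) (c₂ : RelChain Y Z),
    RelChain.comp (myAppend c₁ c₂) = relComp (RelChain.comp c₂) (RelChain.comp c₁)
  | _, _, _, .single r, c₂ => rfl
  | _, _, _, .cons r c, c₂ => by
      show relComp (RelChain.comp (myAppend c c₂)) r = _
      rw [comp_myAppend c c₂]
      show _ = relComp (RelChain.comp c₂) (relComp (RelChain.comp c) r)
      rw [relComp_assoc]

lemma barr_myAppend : ∀ {X Y Z : Type u} (c₁ : RelChain X Y) (c₂ : RelChain Y Z),
    RelChain.barr F (myAppend c₁ c₂)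
      = relComp (RelChain.barr F c₂) (RelChain.barr F c₁)
  | _, _, _, .single r, c₂ => rfl
  | _, _, _, .cons r c, c₂ => by
      show relComp (RelChain.barr F (myAppend c c₂)) (BarrLift F r) = _
      rw [barr_myAppend c c₂]
      show _ = relComp (RelChain.barr F c₂)
        (relComp (RelChain.barr F c) (BarrLift F r))
      rw [relComp_assoc]

lemma allTS_comp : ∀ {X Y : Type u} (c : RelChain X Y), RelChain.allTS c →
    relTotal (RelChain.comp c) ∧ relSurj (RelChain.comp c)
  | _, _, .single r, h => h
  | _, _, .cons r c, h => by
      obtain ⟨⟨ht, hs⟩, h2⟩ := h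
      obtain ⟨ht2, hs2⟩ := allTS_comp c h2
      constructor
      · intro x; obtain ⟨mid, hm⟩ := ht x; obtain ⟨y, hy⟩ := ht2 mid
        exact ⟨y, mid, hm, hy⟩
      · intro y; obtain ⟨mid, hm⟩ := hs2 y; obtain ⟨x, hx⟩ := hs mid
        exact ⟨x, mid, hx, hm⟩

/-- Restriction of a Barr-lifting witness along the left leg, using preservation of
1/4-mono pullbacks. -/
lemma leftRestrict (h : Preserves14MonoPullbacks F) {A B : Type u} (ρ : Rel' A B)
    (S : Set A) (t : F.obj {p : A × B // ρ p.1 p.2}) (a : F.obj ↥S)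
    (hta : F.map (TypeCat.ofHom (fun p : {p : A × B // ρ p.1 p.2} => p.1.1)) t = F.map (TypeCat.ofHom Subtype.val) a) :
    ∃ t' : F.obj {p : ↥{x | x ∈ S ∧ ∃ y, ρ x y} × ↥{y | ∃ x ∈ S, ρ x y} // ρ p.1.1 p.2.1},
      F.map (TypeCat.ofHom (fun p : {p : ↥{x | x ∈ S ∧ ∃ y, ρ x y} × ↥{y | ∃ x ∈ S, ρ x y} // ρ p.1.1 p.2.1}
          => (⟨(p.1.1.1, p.1.2.1), p.2⟩ : {p : A × B // ρ p.1 p.2}))) t' = t ∧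
      F.map (TypeCat.ofHom (fun p : {p : ↥{x | x ∈ S ∧ ∃ y, ρ x y} × ↥{y | ∃ x ∈ S, ρ x y} // ρ p.1.1 p.2.1}
          => (⟨p.1.1.1, p.1.1.2.1⟩ : ↥S))) t' = a := by
  set P := {p : ↥{x | x ∈ S ∧ ∃ y, ρ x y} × ↥{y | ∃ x ∈ S, ρ x y} // ρ p.1.1 p.2.1} with hP
  let j : P → {p : A × B // ρ p.1 p.2} := fun p => ⟨(p.1.1.1, p.1.2.1), p.2⟩
  let q₂ : P → ↥S := fun p => ⟨p.1.1.1, p.1.1.2.1⟩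
  have hinj : Function.Injective j := by
    intro p q hpq
    have h1 : p.1.1.1 = q.1.1.1 := congrArg (fun z => z.1.1) hpq
    have h2 : p.1.2.1 = q.1.2.1 := congrArg (fun z => z.1.2) hpq
    exact Subtype.ext (myProdExt (Subtype.ext h1) (Subtype.ext h2))
  have hpb : IsPBSquare j q₂ (fun p : {p : A × B // ρ p.1 p.2} => p.1.1) Subtype.val := by
    constructor
    · intro p; rfl
    · intro q x hqx
      have hq2 : ρ x.1 q.1.2 := by
        have : q.1.1 = x.1 := hqx
        rw [← this]; exact q.2
      refine ⟨⟨(⟨x.1, ⟨x.2, ⟨q.1.2, hq2⟩⟩⟩, ⟨q.1.2, ⟨x.1, x.2, hq2⟩⟩), hq2⟩, ⟨?_, ?_⟩, ?_⟩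
      · exact Subtype.ext (myProdExt (Eq.symm hqx) rfl)
      · exact Subtype.ext rfl
      · rintro p' ⟨hj, hq⟩
        have e1 : p'.1.1.1 = x.1 := congrArg Subtype.val hq
        have e2 : p'.1.2.1 = q.1.2 := congrArg (fun z => z.1.2) hj
        exact Subtype.ext (myProdExt (Subtype.ext e1) (Subtype.ext e2))
  obtain ⟨hcomm, hfill⟩ :=
    h P {p : A × B // ρ p.1 p.2} (↥S) A j q₂
      (fun p : {p : A × B // ρ p.1 p.2} => p.1.1) Subtype.val hinj hpb
  obtain ⟨t', ⟨ht1, ht2⟩, -⟩ := hfill t a hta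
  exact ⟨t', ht1, ht2⟩

/-- Restriction of a Barr-lifting witness along the right leg (with an injection into
the codomain), using preservation of 1/4-mono pullbacks. -/
lemma rightRestrict (h : Preserves14MonoPullbacks F) {A B C : Type u} (ρ : Rel' A B)
    (ι : C → B) (hι : Function.Injective ι)
    (t : F.obj {p : A × B // ρ p.1 p.2}) (m : F.obj C)
    (htm : F.map (TypeCat.ofHom (fun p : {p : A × B // ρ p.1 p.2} => p.1.2)) t = F.map (TypeCat.ofHom ι) m) :
    ∃ t' : F.obj {p : ↥{x : A | ∃ c, ρ x (ι c)} × C // ρ p.1.1 (ι p.2)},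
      F.map (TypeCat.ofHom (fun p : {p : ↥{x : A | ∃ c, ρ x (ι c)} × C // ρ p.1.1 (ι p.2)}
          => (⟨(p.1.1.1, ι p.1.2), p.2⟩ : {p : A × B // ρ p.1 p.2}))) t' = t ∧
      F.map (TypeCat.ofHom (fun p : {p : ↥{x : A | ∃ c, ρ x (ι c)} × C // ρ p.1.1 (ι p.2)}
          => p.1.2)) t' = m := by
  set P := {p : ↥{x : A | ∃ c, ρ x (ι c)} × C // ρ p.1.1 (ι p.2)} with hP
  let j : P → {p : A × B // ρ p.1 p.2} := fun p => ⟨(p.1.1.1, ι p.1.2), p.2⟩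
  let q₂ : P → C := fun p => p.1.2
  have hinj : Function.Injective j := by
    intro p q hpq
    have h1 : p.1.1.1 = q.1.1.1 := congrArg (fun z => z.1.1) hpq
    have h2 : ι p.1.2 = ι q.1.2 := congrArg (fun z => z.1.2) hpq
    exact Subtype.ext (myProdExt (Subtype.ext h1) (hι h2))
  have hpb : IsPBSquare j q₂ (fun p : {p : A × B // ρ p.1 p.2} => p.1.2) ι := by
    constructor
    · intro p; rfl
    · intro q c hqc
      have hq2 : ρ q.1.1 (ι c) := by
        have : q.1.2 = ι c := hqc
        rw [← this]; exact q.2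
      refine ⟨⟨(⟨q.1.1, ⟨c, hq2⟩⟩, c), hq2⟩, ⟨?_, ?_⟩, ?_⟩
      · exact Subtype.ext (myProdExt rfl (Eq.symm hqc))
      · rfl
      · rintro p' ⟨hj, hq⟩
        have e1 : p'.1.1.1 = q.1.1 := congrArg (fun z => z.1.1) hj
        have e2 : p'.1.2 = c := hq
        exact Subtype.ext (myProdExt (Subtype.ext e1) e2)
  obtain ⟨hcomm, hfill⟩ :=
    h P {p : A × B // ρ p.1 p.2} C B j q₂
      (fun p : {p : A × B // ρ p.1 p.2} => p.1.2) ι hinj hpb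
  obtain ⟨t', ⟨ht1, ht2⟩, -⟩ := hfill t m htm
  exact ⟨t', ht1, ht2⟩

/-- Core lemma: any Barr-chain witness restricts (via pullback preservation) to a
witness over a total-and-surjective restricted chain. -/
lemma mainAux (h : Preserves14MonoPullbacks F) :
    ∀ {X Y : Type u} (c : RelChain X Y) (S : Set X) (a : F.obj ↥S) (b : F.obj Y),
      RelChain.barr F c (F.map (TypeCat.ofHom (Subtype.val : ↥S → X)) a) b →
      ∃ (S' : Set X) (hS : ∀ x, x ∈ S' → x ∈ S) (T : Set Y)
        (c' : RelChain ↥S' ↥T) (a' : F.obj ↥S') (b' : F.obj ↥T),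
        RelChain.allTS c' ∧
        (∀ (x : ↥S') (y : ↥T), RelChain.comp c' x y → RelChain.comp c x.1 y.1) ∧
        RelChain.barr F c' a' b' ∧
        F.map (TypeCat.ofHom (fun x : ↥S' => (⟨x.1, hS x.1 x.2⟩ : ↥S))) a' = a ∧
        F.map (TypeCat.ofHom (Subtype.val : ↥T → Y)) b' = b := by
  intro X Y c
  induction c with
  | @single X Y r =>
      intro S a b hb
      obtain ⟨t, ht1, ht2⟩ := hb
      obtain ⟨t', htj, hta⟩ := leftRestrict F h r S t a ht1
      refine ⟨{x | x ∈ S ∧ ∃ y, r x y}, fun x hx => hx.1, {y | ∃ x ∈ S, r x y},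
        .single (fun x y => r x.1 y.1),
        F.map (TypeCat.ofHom (fun p => p.1.1)) t', F.map (TypeCat.ofHom (fun p => p.1.2)) t',
        ⟨?_, ?_⟩, ?_, ⟨t', rfl, rfl⟩, ?_, ?_⟩
      · intro x
        obtain ⟨y, hy⟩ := x.2.2
        exact ⟨⟨y, ⟨x.1, x.2.1, hy⟩⟩, hy⟩
      · intro y
        obtain ⟨x, hxS, hr⟩ := y.2
        exact ⟨⟨x, hxS, ⟨y.1, hr⟩⟩, hr⟩
      · intro x y hxy; exact hxy
      · rw [fmap_fmap]; exact hta
      · rw [fmap_fmap]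
        rw [← htj] at ht2
        rw [fmap_fmap] at ht2
        exact ht2
  | @cons X M Y r c ih =>
      intro S a b hb
      obtain ⟨m, ⟨t, ht1, ht2⟩, hbc⟩ := hb
      obtain ⟨t₁, htj, hta⟩ := leftRestrict F h r S t a ht1
      have hm₁ : F.map (TypeCat.ofHom (Subtype.val : ↥{y | ∃ x ∈ S, r x y} → M))
          (F.map (TypeCat.ofHom (fun p => p.1.2)) t₁) = m := by
        rw [fmap_fmap]
        rw [← htj] at ht2
        rw [fmap_fmap] at ht2
        exact ht2
      obtain ⟨W, hW, T, c', m', b', hTS, hcomp, hbarr, hm', hb'⟩ :=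
        ih {y | ∃ x ∈ S, r x y} (F.map (TypeCat.ofHom (fun p => p.1.2)) t₁) b (by rw [hm₁]; exact hbc)
      -- right restriction of the head along W
      have hι : Function.Injective
          (fun x : ↥W => (⟨x.1, hW x.1 x.2⟩ : ↥{y | ∃ x ∈ S, r x y})) :=
        by
          intro x y hxy
          have h2 : ((⟨x.1, hW x.1 x.2⟩ : ↥{y | ∃ x ∈ S, r x y}))
              = ⟨y.1, hW y.1 y.2⟩ := hxy
          injection h2 with h3
          exact Subtype.ext h3
      obtain ⟨t₂, htj₂, htm₂⟩ :=
        rightRestrict F h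
          (fun (x : ↥{x | x ∈ S ∧ ∃ y, r x y}) (y : ↥{y | ∃ x ∈ S, r x y}) => r x.1 y.1)
          (fun x : ↥W => (⟨x.1, hW x.1 x.2⟩ : ↥{y | ∃ x ∈ S, r x y})) hι t₁ m' hm'.symm
      -- transport to a tabulation over a subset of X
      refine ⟨{x | x ∈ S ∧ ∃ y ∈ W, r x y}, fun x hx => hx.1, T,
        .cons (fun (x : ↥{x | x ∈ S ∧ ∃ y ∈ W, r x y}) (y : ↥W) => r x.1 y.1) c',
        F.map (TypeCat.ofHom (fun p : {p : ↥{x | x ∈ S ∧ ∃ y ∈ W, r x y} × ↥W // r p.1.1 p.2.1} => p.1.1))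
          (F.map (TypeCat.ofHom (fun q => ⟨(⟨q.1.1.1.1, ⟨q.1.1.1.2.1, ⟨q.1.2.1, q.1.2.2, q.2⟩⟩⟩, q.1.2), q.2⟩)) t₂),
        b', ⟨⟨?_, ?_⟩, hTS⟩, ?_, ⟨m', ⟨(F.map (TypeCat.ofHom (fun q =>
            ⟨(⟨q.1.1.1.1, ⟨q.1.1.1.2.1, ⟨q.1.2.1, q.1.2.2, q.2⟩⟩⟩, q.1.2), q.2⟩)) t₂), rfl, ?_⟩,
          hbarr⟩, ?_, hb'⟩
      · -- totality of restricted head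
        intro x
        obtain ⟨y, hyW, hr⟩ := x.2.2
        exact ⟨⟨y, hyW⟩, hr⟩
      · -- surjectivity of restricted head
        intro w
        obtain ⟨x, hxS, hr⟩ := hW w.1 w.2
        exact ⟨⟨x, hxS, ⟨w.1, w.2, hr⟩⟩, hr⟩
      · -- composite restriction
        rintro x y ⟨w, hrw, hcw⟩
        exact ⟨w.1, hrw, hcomp w y hcw⟩
      · -- second projection of transported witness is m'
        rw [fmap_fmap]
        exact htm₂
      · -- first projection maps back to a
        rw [fmap_fmap, fmap_fmap]
        rw [← htj₂] at hta
        rw [fmap_fmap] at hta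
        exact hta

/-- Key lemma: any Barr-chain whose composite is contained in the identity has
sub-identical Barr composite, given the chain condition for total surjective chains. -/
lemma keyLemma (h : Preserves14MonoPullbacks F)
    (hchain : ∀ (X : Type u) (c : RelChain X X), RelChain.allTS c →
      RelChain.comp c = relId X → relLe (RelChain.barr F c) (relId (F.obj X)))
    {X : Type u} (c : RelChain X X) (hle : relLe (RelChain.comp c) (relId X))
    {a b : F.obj X} (hb : RelChain.barr F c a b) : a = b := by
  have hval : F.map (TypeCat.ofHom (Subtype.val : ↥(Set.univ : Set X) → X))
      (F.map (TypeCat.ofHom (fun x : X => (⟨x, trivial⟩ : ↥(Set.univ : Set X)))) a) = a := by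
    rw [fmap_fmap]; exact fmap_id' F a
  obtain ⟨S', hS, T, c', a', b', hTS, hcomp, hbarr, ha, hb2⟩ :=
    mainAux F h c Set.univ (F.map (TypeCat.ofHom (fun x : X => (⟨x, trivial⟩ : ↥(Set.univ : Set X)))) a) b
      (by rw [hval]; exact hb)
  obtain ⟨htot, hsurj⟩ := allTS_comp c' hTS
  have hST : S' = T := by
    ext z; constructor
    · intro hz
      obtain ⟨y, hy⟩ := htot ⟨z, hz⟩
      have he : z = y.1 := hle _ _ (hcomp _ _ hy)
      rw [he]; exact y.2
    · intro hz
      obtain ⟨x, hx⟩ := hsurj ⟨z, hz⟩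
      have he : x.1 = z := hle _ _ (hcomp _ _ hx)
      rw [← he]; exact x.2
  subst hST
  have hcompId : RelChain.comp c' = relId ↥S' := by
    funext x y; apply propext
    constructor
    · intro hxy
      exact Subtype.ext (hle _ _ (hcomp _ _ hxy))
    · intro hxy
      have hxy' : x = y := hxy
      subst hxy'
      obtain ⟨z, hz⟩ := htot x
      have : z = x := Subtype.ext (hle _ _ (hcomp _ _ hz)).symm
      rw [this] at hz; exact hz
  have hab : a' = b' := hchain _ c' hTS hcompId a' b' hbarr
  have ha2 : F.map (TypeCat.ofHom (Subtype.val : ↥S' → X)) a' = a := by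
    rw [← hval, ← ha, fmap_fmap]
  rw [← ha2, hab, hb2]

end Auxiliary
/-- A functor preserving 1/4-mono pullbacks admits a normal lax extension provided the
subidentity condition holds for all composable sequences of total and surjective
relations. -/
theorem stmt17 (F : Type u ⥤ Type u) (h : Preserves14MonoPullbacks F)
    (hchain : ∀ (X : Type u) (c : RelChain X X), RelChain.allTS c →
      RelChain.comp c = relId X → relLe (RelChain.barr F c) (relId (F.obj X))) :
    ∃ L : LaxExt F, L.IsNormal := by
  refine ⟨{
    ext := fun {X Y} r a b => ∃ c : RelChain X Y,
      relLe (RelChain.comp c) r ∧ RelChain.barr F c a b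
    mono := ?_
    lcomp := ?_
    mapLe := ?_
    mapConvLe := ?_ }, ?_⟩
  · -- mono
    rintro X Y r r' hrr' a b ⟨c, h1, h2⟩
    exact ⟨c, fun x y hxy => hrr' x y (h1 x y hxy), h2⟩
  · -- lcomp
    rintro X Y Z r s a cc ⟨mb, ⟨c₁, hc₁, hb₁⟩, ⟨c₂, hc₂, hb₂⟩⟩
    refine ⟨myAppend c₁ c₂, ?_, ?_⟩
    · rw [comp_myAppend]
      rintro x z ⟨y, h1, h2⟩
      exact ⟨y, hc₁ x y h1, hc₂ y z h2⟩
    · rw [barr_myAppend]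
      exact ⟨mb, hb₁, hb₂⟩
  · -- mapLe
    intro X Y f a b hab
    refine ⟨.single (graphRel f), fun x y hxy => hxy, ?_⟩
    have hb : BarrLift F (graphRel f) a (F.map (TypeCat.ofHom f) a) := barr_graph F f a
    rwa [hab] at hb
  · -- mapConvLe
    intro X Y f a b hab
    refine ⟨.single (relConv (graphRel f)), fun x y hxy => hxy, ?_⟩
    have hb : BarrLift F (relConv (graphRel f)) (F.map (TypeCat.ofHom f) b) b := barr_graphConv F f b
    have hab' : F.map (TypeCat.ofHom f) b = a := hab
    rwa [hab'] at hb
  · -- normality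
    intro X
    funext a b
    apply propext
    constructor
    · rintro ⟨c, hle, hbarr⟩
      exact keyLemma F h hchain c hle hbarr
    · intro hab
      have hab' : a = b := hab
      subst hab'
      exact ⟨.single (relId X), fun x y hxy => hxy, barr_relId F a⟩
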